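/- Vanishing of the argument in the denominator: suppose h : ℂⁿ → ℝ satisfies |h(ζ)| ≤ C|ζ|³, g(ζ) := f(h(ζ),ζ) satisfies |g(ζ) − |ζ|²| ≤ C|ζ|³, and a, b : ℝ≥0 × ℂⁿ → ℂⁿ are continuous (hence bounded near (0,0)). Define θ(s,ζ) = −(h(ζ) + s ζ·a(s,ζ)) / (g(ζ) + s + s ζ·b(s,ζ)) wherever the denominator is nonzero. Then θ(s,ζ) → 0 as (s,ζ) → (0,0) with s > 0, ζ ≠ 0. -/

import Mathlib

open Filter

set_option maxHeartbeats 1000000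

lemma sum_mul_norm_le {n : ℕ} (ζ w : EuclideanSpace ℂ (Fin n)) :
    ‖∑ j, ζ j * w j‖ ≤ ‖ζ‖ * ‖w‖ := by
  set ζ' : EuclideanSpace ℂ (Fin n) := WithLp.toLp 2 (fun j => starRingEnd ℂ (ζ j)) with hζ'
  have h1 : ∑ j, ζ j * w j = inner (𝕜 := ℂ) ζ' w := by
    simp [PiLp.inner_apply, RCLike.inner_apply, hζ', mul_comm]
  have h2 : ‖ζ'‖ = ‖ζ‖ := by
    simp [EuclideanSpace.norm_eq, hζ']
  calc ‖∑ j, ζ j * w j‖ ≤ ‖ζ'‖ * ‖w‖ := by rw [h1]; exact norm_inner_le_norm _ _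
    _ = ‖ζ‖ * ‖w‖ := by rw [h2]

/-- Vanishing of the argument in the denominator: with `h(ζ) = O(|ζ|³)`,
`g(ζ) = |ζ|² + O(|ζ|³)`, and continuous `a`, `b`, the quotient
`θ(s,ζ) = −(h(ζ) + s ζ·a(s,ζ)) / (g(ζ) + s + s ζ·b(s,ζ))` tends to `0` as
`(s,ζ) → (0,0)` with `s > 0`, `ζ ≠ 0`. -/
theorem theta_tendsto_zero {n : ℕ}
    (h : EuclideanSpace ℂ (Fin n) → ℝ) (g : EuclideanSpace ℂ (Fin n) → ℝ)
    (a b : ℝ × EuclideanSpace ℂ (Fin n) → EuclideanSpace ℂ (Fin n))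
    (ha : Continuous a) (hb : Continuous b)
    (C δ : ℝ) (hδ : 0 < δ)
    (hh : ∀ ζ : EuclideanSpace ℂ (Fin n), ‖ζ‖ < δ → |h ζ| ≤ C * ‖ζ‖ ^ 3)
    (hg : ∀ ζ : EuclideanSpace ℂ (Fin n), ‖ζ‖ < δ → |g ζ - ‖ζ‖ ^ 2| ≤ C * ‖ζ‖ ^ 3) :
    Tendsto
      (fun p : ℝ × EuclideanSpace ℂ (Fin n) =>
        -(((h p.2 : ℂ) + p.1 * ∑ j, p.2 j * a p j) /
          ((g p.2 : ℂ) + p.1 + p.1 * ∑ j, p.2 j * b p j)))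
      (nhdsWithin (0, 0) {p : ℝ × EuclideanSpace ℂ (Fin n) | 0 < p.1 ∧ p.2 ≠ 0})
      (nhds 0) := by
  set M : ℝ := max ‖a (0, 0)‖ ‖b (0, 0)‖ + 1 with hM
  have hM0 : 0 < M := by positivity
  set C' : ℝ := max C 0 with hC'
  have hC'0 : 0 ≤ C' := le_max_right _ _
  have hCC' : C ≤ C' := le_max_left _ _
  set K : ℝ := 2 * C' + 2 * M with hKdef
  have hK0 : 0 < K := by positivity
  set ε : ℝ := min δ (min (1 / (2 * M)) (1 / (2 * C' + 1))) with hε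
  have hε0 : 0 < ε := by
    refine lt_min hδ (lt_min (by positivity) (by positivity))
  -- eventual bounds on a and b
  have hea : ∀ᶠ p : ℝ × EuclideanSpace ℂ (Fin n) in nhds (0, 0), ‖a p‖ < M :=
    (ha.norm.tendsto (0, 0)).eventually_lt_const
      (by nlinarith [le_max_left ‖a (0,0)‖ ‖b (0,0)‖])
  have heb : ∀ᶠ p : ℝ × EuclideanSpace ℂ (Fin n) in nhds (0, 0), ‖b p‖ < M :=
    (hb.norm.tendsto (0, 0)).eventually_lt_const
      (by nlinarith [le_max_right ‖a (0,0)‖ ‖b (0,0)‖])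
  have heζ : ∀ᶠ p : ℝ × EuclideanSpace ℂ (Fin n) in nhds (0, 0), ‖p.2‖ < ε := by
    have hcont : Tendsto (fun p : ℝ × EuclideanSpace ℂ (Fin n) => ‖p.2‖) (nhds (0, 0)) (nhds ‖((0, 0) : ℝ × EuclideanSpace ℂ (Fin n)).2‖) :=
      (continuous_snd.norm.tendsto _)
    simp only [norm_zero] at hcont
    exact hcont.eventually_lt_const hε0
  have key : ∀ᶠ p : ℝ × EuclideanSpace ℂ (Fin n) in
      nhdsWithin (0, 0) {p : ℝ × EuclideanSpace ℂ (Fin n) | 0 < p.1 ∧ p.2 ≠ 0},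
      ‖-(((h p.2 : ℂ) + p.1 * ∑ j, p.2 j * a p j) /
          ((g p.2 : ℂ) + p.1 + p.1 * ∑ j, p.2 j * b p j))‖ ≤ K * ‖p.2‖ := by
    filter_upwards [((hea.and heb).and heζ).filter_mono nhdsWithin_le_nhds,
      self_mem_nhdsWithin] with p hp hpS
    obtain ⟨⟨haM, hbM⟩, hζε⟩ := hp
    obtain ⟨hs, hζ0⟩ := hpS
    set s := p.1 with hsdef
    set ζ := p.2 with hζdef
    have hζpos : 0 < ‖ζ‖ := norm_pos_iff.mpr hζ0
    have hζδ : ‖ζ‖ < δ := lt_of_lt_of_le hζε (min_le_left _ _)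
    have hMζ : M * ‖ζ‖ < 1 / 2 := by
      have h1 : ‖ζ‖ < 1 / (2 * M) := lt_of_lt_of_le hζε ((min_le_right _ _).trans (min_le_left _ _))
      rw [lt_div_iff₀ (by positivity)] at h1
      nlinarith
    have hC'ζ : C' * ‖ζ‖ ≤ 1 / 2 := by
      have h1 : ‖ζ‖ < 1 / (2 * C' + 1) := lt_of_lt_of_le hζε ((min_le_right _ _).trans (min_le_right _ _))
      rw [lt_div_iff₀ (by positivity)] at h1
      nlinarith
    set α : ℂ := ∑ j, ζ j * a p j with hαdef
    set β : ℂ := ∑ j, ζ j * b p j with hβdef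
    have hα : ‖α‖ ≤ M * ‖ζ‖ := by
      refine (sum_mul_norm_le ζ (a p)).trans ?_
      nlinarith [norm_nonneg ζ]
    have hβ : ‖β‖ ≤ M * ‖ζ‖ := by
      refine (sum_mul_norm_le ζ (b p)).trans ?_
      nlinarith [norm_nonneg ζ]
    set D : ℂ := (g ζ : ℂ) + s + s * β with hD
    have hgζ := abs_le.mp (hg ζ hζδ)
    have hhζ := abs_le.mp (hh ζ hζδ)
    have hβre : |β.re| ≤ ‖β‖ := Complex.abs_re_le_norm β
    have hβre' := abs_le.mp hβre
    have hDre : (‖ζ‖ ^ 2 + s) / 2 ≤ D.re := by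
      have h1 : D.re = g ζ + s + s * β.re := by
        simp [hD, Complex.add_re, Complex.ofReal_re, Complex.re_ofReal_mul]
      rw [h1]
      nlinarith [mul_nonneg (sub_nonneg.mpr hCC') (pow_nonneg (norm_nonneg ζ) 3),
        mul_nonneg (by linarith : (0:ℝ) ≤ 1/2 - C' * ‖ζ‖) (sq_nonneg ‖ζ‖),
        mul_nonneg hs.le (by linarith [hβre'.1, hβ] : (0:ℝ) ≤ β.re + M * ‖ζ‖),
        mul_nonneg hs.le (by linarith : (0:ℝ) ≤ 1/2 - M * ‖ζ‖)]
    have hDrepos : 0 < D.re := lt_of_lt_of_le (by positivity) hDre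
    have hDne : D ≠ 0 := fun hc => by simp [hc] at hDrepos
    have hDnorm : 0 < ‖D‖ := norm_pos_iff.mpr hDne
    have hreleD : D.re ≤ ‖D‖ := Complex.re_le_norm D
    set N : ℂ := (h ζ : ℂ) + s * α with hN
    have hNle : ‖N‖ ≤ C' * ‖ζ‖ ^ 3 + M * (s * ‖ζ‖) := by
      calc ‖N‖ ≤ ‖((h ζ : ℝ) : ℂ)‖ + ‖(s : ℂ) * α‖ := norm_add_le _ _
        _ = |h ζ| + |s| * ‖α‖ := by
            rw [Complex.norm_real, Real.norm_eq_abs, norm_mul, Complex.norm_real,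
              Real.norm_eq_abs]
        _ ≤ C * ‖ζ‖ ^ 3 + s * (M * ‖ζ‖) := by
            rw [abs_of_pos hs]
            gcongr
            exact hh ζ hζδ
        _ ≤ C' * ‖ζ‖ ^ 3 + M * (s * ‖ζ‖) := by nlinarith [norm_nonneg ζ, pow_nonneg (norm_nonneg ζ) 3]
    have hfinal : ‖N‖ ≤ K * ‖ζ‖ * ‖D‖ := by
      have h2 : ‖N‖ ≤ K * ‖ζ‖ * D.re := by
        refine hNle.trans ?_
        have hmon := mul_le_mul_of_nonneg_left hDre (by positivity : (0:ℝ) ≤ K * ‖ζ‖)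
        have hexp : K * ‖ζ‖ * ((‖ζ‖ ^ 2 + s) / 2)
            = C' * ‖ζ‖ ^ 3 + C' * (s * ‖ζ‖) + M * ‖ζ‖ ^ 3 + M * (s * ‖ζ‖) := by
          rw [hKdef]; ring
        rw [hexp] at hmon
        have h3 : 0 ≤ C' * (s * ‖ζ‖) :=
          mul_nonneg hC'0 (mul_nonneg hs.le (norm_nonneg ζ))
        have h4 : 0 ≤ M * ‖ζ‖ ^ 3 := mul_nonneg hM0.le (pow_nonneg (norm_nonneg ζ) 3)
        linarith
      refine h2.trans ?_
      exact mul_le_mul_of_nonneg_left hreleD (by positivity)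
    rw [norm_neg, norm_div]
    rw [div_le_iff₀ hDnorm]
    exact hfinal
  refine squeeze_zero_norm' key ?_
  have hcont : Tendsto (fun p : ℝ × EuclideanSpace ℂ (Fin n) => K * ‖p.2‖) (nhds (0, 0)) (nhds (K * ‖((0,0) : ℝ × EuclideanSpace ℂ (Fin n)).2‖)) :=
    (continuous_const.mul continuous_snd.norm).tendsto _
  simp only [norm_zero, mul_zero] at hcont
  exact hcont.mono_left nhdsWithin_le_nhds
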